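/- Let μ and ν be probability measures on a Polish space X. Then the relative entropy admits the variational representation H(μ|ν) = sup{⟨μ, φ⟩ : φ ∈ C_b(X), ⟨ν, e^φ⟩ = 1}, where H(μ|ν) = ∫ log(dμ/dν) dμ if μ ≪ ν and ∞ otherwise. -/

import Mathlib

open scoped Classical
open MeasureTheory Filter BoundedContinuousFunction
open scoped ENNReal

section RealLemmas

lemma dv_key {t a : ℝ} (ht : 0 ≤ t) : t * a ≤ t * Real.log t - t + Real.exp a := by
  rcases eq_or_lt_of_le ht with h | h
  · rw [← h]
    simpa using (Real.exp_pos a).le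
  · have h1 := Real.add_one_le_exp (a - Real.log t)
    have h2 : Real.exp (a - Real.log t) = Real.exp a / t := by
      rw [Real.exp_sub, Real.exp_log h]
    rw [h2] at h1
    have h3 := (le_div_iff₀ h).1 h1
    nlinarith

lemma dv_nonneg {t : ℝ} (ht : 0 ≤ t) : 0 ≤ t * Real.log t - t + 1 := by
  have := dv_key (a := 0) ht
  simpa using this

lemma dv_exp_lip' {a b M : ℝ} (hb : b ≤ M) (h : a ≤ b) :
    Real.exp b - Real.exp a ≤ Real.exp M * (b - a) := by
  have h1 := Real.add_one_le_exp (a - b)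
  have h2 : Real.exp b ≤ Real.exp M := Real.exp_le_exp.2 hb
  have h3 : Real.exp (a - b) * Real.exp b = Real.exp a := by
    rw [← Real.exp_add]; ring_nf
  nlinarith [Real.exp_pos b, Real.exp_pos a]

lemma dv_exp_lip {a b M : ℝ} (ha : a ≤ M) (hb : b ≤ M) :
    |Real.exp a - Real.exp b| ≤ Real.exp M * |a - b| := by
  rcases le_total a b with h | h
  · rw [abs_of_nonpos (by simpa using Real.exp_le_exp.2 h), abs_of_nonpos (by linarith)]
    have := dv_exp_lip' hb h
    linarith
  · rw [abs_of_nonneg (by simpa using Real.exp_le_exp.2 h), abs_of_nonneg (by linarith)]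
    have := dv_exp_lip' ha h
    linarith

lemma dv_log_lip {a b m : ℝ} (hm : 0 < m) (ha : m ≤ a) (hb : m ≤ b) :
    |Real.log a - Real.log b| ≤ m⁻¹ * |a - b| := by
  have key : ∀ x y : ℝ, m ≤ x → m ≤ y → x ≤ y →
      Real.log y - Real.log x ≤ m⁻¹ * (y - x) := by
    intro x y hx hy hxy
    have hx0 : 0 < x := lt_of_lt_of_le hm hx
    have hy0 : 0 < y := lt_of_lt_of_le hm hy
    have e1 : Real.log y - Real.log x = Real.log (y / x) :=
      (Real.log_div hy0.ne' hx0.ne').symm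
    rw [e1]
    have h2 : Real.log (y / x) ≤ y / x - 1 := Real.log_le_sub_one_of_pos (by positivity)
    have e2 : y / x - 1 = (y - x) / x := by field_simp
    rw [e2] at h2
    refine h2.trans ?_
    rw [div_eq_inv_mul]
    have hinv : x⁻¹ ≤ m⁻¹ := by
      rw [inv_le_inv₀ hx0 hm]
      exact hx
    exact mul_le_mul_of_nonneg_right hinv (by linarith)
  rcases le_total a b with h | h
  · rw [abs_of_nonpos (by simpa using Real.log_le_log (lt_of_lt_of_le hm ha) h),
      abs_of_nonpos (by linarith)]
    have := key a b ha hb h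
    linarith
  · rw [abs_of_nonneg (by simpa using Real.log_le_log (lt_of_lt_of_le hm hb) h),
      abs_of_nonneg (by linarith)]
    have := key b a hb ha h
    linarith

lemma dv_abs_min_sub_min {a b c : ℝ} : |min a c - min b c| ≤ |a - b| := by
  have h := abs_max_sub_max_le_abs (-a) (-b) (-c)
  rw [max_neg_neg, max_neg_neg, neg_sub_neg, neg_sub_neg] at h
  rw [abs_sub_comm]
  exact h.trans (le_of_eq (abs_sub_comm _ _))

lemma dv_clamp_lip {a b M : ℝ} (hb : |b| ≤ M) :
    |max (min a M) (-M) - b| ≤ |a - b| := by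
  rw [abs_le] at hb
  have hb1 : min b M = b := min_eq_left hb.2
  have hb2 : max b (-M) = b := max_eq_left hb.1
  calc |max (min a M) (-M) - b| = |max (min a M) (-M) - max (min b M) (-M)| := by
        rw [hb1, hb2]
  _ ≤ |min a M - min b M| := abs_max_sub_max_le_abs _ _ _
  _ ≤ |a - b| := dv_abs_min_sub_min

/-- Nonnegativity of the truncated integrand. -/
lemma dv_clamp_nonneg {t N : ℝ} (ht : 0 ≤ t) (hN : 1 ≤ N) :
    0 ≤ t * Real.log (max (min t N) N⁻¹) - max (min t N) N⁻¹ + 1 := by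
  have hN0 : 0 < N := lt_of_lt_of_le one_pos hN
  have hNN : N * N⁻¹ = 1 := mul_inv_cancel₀ hN0.ne'
  have hNinv0 : 0 < N⁻¹ := by positivity
  have hNinv : N⁻¹ ≤ N := by nlinarith
  have hlogN : 0 ≤ Real.log N := Real.log_nonneg hN
  have hlogN' : 1 - N⁻¹ ≤ Real.log N := by
    have := Real.log_le_sub_one_of_pos (x := N⁻¹) (by positivity)
    rw [Real.log_inv] at this
    linarith
  have hlogN'' : Real.log N + 1 ≤ N := by
    have := Real.add_one_le_exp (Real.log N)
    rwa [Real.exp_log hN0] at this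
  rcases le_total t N⁻¹ with h1 | h1
  · have e1 : min t N = t := min_eq_left (h1.trans hNinv)
    have e2 : max t N⁻¹ = N⁻¹ := max_eq_right h1
    rw [e1, e2, Real.log_inv]
    have h3 : t * Real.log N ≤ N⁻¹ * Real.log N := by
      gcongr
    have h4 : N⁻¹ * Real.log N + N⁻¹ ≤ 1 := by
      have h5 : N⁻¹ * (Real.log N + 1) ≤ N⁻¹ * N := by gcongr
      rw [inv_mul_cancel₀ hN0.ne'] at h5
      nlinarith
    nlinarith
  · rcases le_total t N with h2 | h2
    · have e1 : min t N = t := min_eq_left h2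
      have e2 : max t N⁻¹ = t := max_eq_left h1
      rw [e1, e2]
      exact dv_nonneg ht
    · have e1 : min t N = N := min_eq_right h2
      have e2 : max N N⁻¹ = N := max_eq_left hNinv
      rw [e1, e2]
      have h3 : N * Real.log N ≤ t * Real.log N := by gcongr
      nlinarith

end RealLemmas

section DV
set_option linter.unusedSectionVars false

variable {X : Type*} [MeasurableSpace X] [TopologicalSpace X] [PolishSpace X] [BorelSpace X]
variable (μ ν : Measure X) [IsProbabilityMeasure μ] [IsProbabilityMeasure ν]

lemma dv_int_of_bound (ρ : Measure X) [IsFiniteMeasure ρ] {φ : X → ℝ}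
    (hm : AEStronglyMeasurable φ ρ) (M : ℝ) (hb : ∀ x, ‖φ x‖ ≤ M) : Integrable φ ρ :=
  (integrable_const M).mono' hm (ae_of_all _ hb)

lemma dv_int_exp (ρ : Measure X) [IsFiniteMeasure ρ] (ψ : X →ᵇ ℝ) :
    Integrable (fun x => Real.exp (ψ x)) ρ := by
  refine dv_int_of_bound ρ ((Real.continuous_exp.comp ψ.continuous).aestronglyMeasurable)
    (Real.exp ‖ψ‖) (fun x => ?_)
  rw [Real.norm_eq_abs, abs_of_pos (Real.exp_pos _)]
  exact Real.exp_le_exp.2 ((le_abs_self _).trans (ψ.norm_coe_le_norm x))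

lemma dv_exp_integral_pos (ψ : X →ᵇ ℝ) : 0 < ∫ x, Real.exp (ψ x) ∂ν := by
  have h : ∀ x, Real.exp (-‖ψ‖) ≤ Real.exp (ψ x) := fun x =>
    Real.exp_le_exp.2 (neg_le_of_abs_le (by rw [← Real.norm_eq_abs]; exact ψ.norm_coe_le_norm x))
  calc (0:ℝ) < Real.exp (-‖ψ‖) := Real.exp_pos _
  _ = ∫ _x, Real.exp (-‖ψ‖) ∂ν := by simp
  _ ≤ ∫ x, Real.exp (ψ x) ∂ν := integral_mono (integrable_const _) (dv_int_exp ν ψ) h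

lemma dv_normalize (ψ : X →ᵇ ℝ) :
    ∃ φ : X →ᵇ ℝ, (∫ x, Real.exp (φ x) ∂ν = 1) ∧
      ∫ x, φ x ∂μ = ∫ x, ψ x ∂μ - Real.log (∫ x, Real.exp (ψ x) ∂ν) := by
  set A := ∫ x, Real.exp (ψ x) ∂ν with hA
  have hA0 : 0 < A := dv_exp_integral_pos ν ψ
  refine ⟨ψ - BoundedContinuousFunction.const X (Real.log A), ?_, ?_⟩
  · have he : (fun x => Real.exp ((ψ - BoundedContinuousFunction.const X (Real.log A)) x))
        = fun x => Real.exp (ψ x) * A⁻¹ := by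
      funext x
      rw [BoundedContinuousFunction.sub_apply, BoundedContinuousFunction.const_apply,
        Real.exp_sub, Real.exp_log hA0, div_eq_mul_inv]
    rw [he, integral_mul_const]
    exact mul_inv_cancel₀ hA0.ne'
  · have he : (fun x => (ψ - BoundedContinuousFunction.const X (Real.log A)) x)
        = fun x => ψ x - Real.log A := by
      funext x
      rw [BoundedContinuousFunction.sub_apply, BoundedContinuousFunction.const_apply]
    rw [he, integral_sub (ψ.integrable μ) (integrable_const _), integral_const]
    simp

lemma dv_upper (ac : μ ≪ ν) (φ : X →ᵇ ℝ) (hZ : ∫ x, Real.exp (φ x) ∂ν = 1) :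
    ENNReal.ofReal (∫ x, φ x ∂μ) ≤
      ∫⁻ x, ENNReal.ofReal ((μ.rnDeriv ν x).toReal * Real.log (μ.rnDeriv ν x).toReal
        - (μ.rnDeriv ν x).toReal + 1) ∂ν := by
  set f : X → ℝ := fun x => (μ.rnDeriv ν x).toReal with hfdef
  set g : X → ℝ := fun x => f x * Real.log (f x) - f x + 1 with hgdef
  show ENNReal.ofReal (∫ x, φ x ∂μ) ≤ ∫⁻ x, ENNReal.ofReal (g x) ∂ν
  by_cases htop : ∫⁻ x, ENNReal.ofReal (g x) ∂ν = ⊤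
  · rw [htop]; exact le_top
  have hfm : Measurable f := (Measure.measurable_rnDeriv μ ν).ennreal_toReal
  have hf0 : ∀ x, 0 ≤ f x := fun x => ENNReal.toReal_nonneg
  have hgm : Measurable g :=
    ((hfm.mul (Real.measurable_log.comp hfm)).sub hfm).add_const 1
  have hg0 : ∀ x, 0 ≤ g x := fun x => dv_nonneg (hf0 x)
  have hgint : Integrable g ν := ⟨hgm.aestronglyMeasurable,
    (hasFiniteIntegral_iff_ofReal (ae_of_all _ hg0)).2 (lt_top_iff_ne_top.2 htop)⟩
  rw [← ofReal_integral_eq_lintegral_ofReal hgint (ae_of_all _ hg0)]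
  apply ENNReal.ofReal_le_ofReal
  rw [← MeasureTheory.integral_rnDeriv_smul ac]
  have hfint : Integrable f ν := Measure.integrable_toReal_rnDeriv
  have hfφ : Integrable (fun x => f x * φ x) ν := by
    refine (hfint.const_mul ‖φ‖).mono'
      ((hfm.mul φ.continuous.measurable).aestronglyMeasurable) (ae_of_all _ fun x => ?_)
    rw [Real.norm_eq_abs, abs_mul, abs_of_nonneg (hf0 x), mul_comm ‖φ‖ (f x)]
    exact mul_le_mul_of_nonneg_left (by rw [← Real.norm_eq_abs]; exact φ.norm_coe_le_norm x) (hf0 x)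
  have hexp : Integrable (fun x => Real.exp (φ x)) ν := dv_int_exp ν φ
  have hmono : ∀ x, f x * φ x ≤ g x + (Real.exp (φ x) - 1) := fun x => by
    have := dv_key (a := φ x) (hf0 x)
    simp only [hgdef]
    linarith
  calc ∫ x, f x • φ x ∂ν = ∫ x, f x * φ x ∂ν := by simp [smul_eq_mul]
  _ ≤ ∫ x, (g x + (Real.exp (φ x) - 1)) ∂ν :=
      integral_mono hfφ (hgint.add (hexp.sub (integrable_const 1))) hmono
  _ = (∫ x, g x ∂ν) + ∫ x, (Real.exp (φ x) - 1) ∂ν :=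
      integral_add hgint (hexp.sub (integrable_const 1))
  _ = ∫ x, g x ∂ν := by
      rw [integral_sub hexp (integrable_const 1), hZ]
      simp

lemma dv_not_ac (hac : ¬ μ ≪ ν) (M : ℝ) :
    ∃ φ : X →ᵇ ℝ, (∫ x, Real.exp (φ x) ∂ν = 1) ∧ M ≤ ∫ x, φ x ∂μ := by
  -- a set of `ν`-measure zero but positive `μ`-measure
  have hS : ∃ s, ν s = 0 ∧ μ s ≠ 0 := by
    by_contra h
    push_neg at h
    exact hac (Measure.AbsolutelyContinuous.mk fun s _ hs => h s hs)
  obtain ⟨S, hSν, hSμ⟩ := hS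
  set A := toMeasurable ν S with hAdef
  have hAm : MeasurableSet A := measurableSet_toMeasurable ν S
  have hAν : ν A = 0 := by rw [hAdef, measure_toMeasurable]; exact hSν
  have hAμ : μ A ≠ 0 := fun h => hSμ (measure_mono_null (subset_toMeasurable ν S) h)
  -- a closed subset of positive `μ`-measure
  obtain ⟨K, hKA, hKclosed, hKμ⟩ :=
    hAm.exists_isClosed_lt_add (μ := μ) (measure_ne_top μ A) (ε := μ A) hAμ
  have hK0 : μ K ≠ 0 := by
    intro h
    rw [h, zero_add] at hKμ
    exact lt_irrefl _ hKμ
  set m := (μ K).toReal with hmdef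
  have hm0 : 0 < m := ENNReal.toReal_pos hK0 (measure_ne_top μ K)
  set c := max 0 ((M + Real.log 2) / m) with hcdef
  have hc0 : 0 ≤ c := le_max_left _ _
  have hcm : M + Real.log 2 ≤ c * m := by
    have h1 : (M + Real.log 2) / m ≤ c := le_max_right _ _
    calc M + Real.log 2 = ((M + Real.log 2) / m) * m := by field_simp
    _ ≤ c * m := mul_le_mul_of_nonneg_right h1 hm0.le
  -- an open superset of `K` with small `ν`-measure
  have hKν : ν K = 0 := measure_mono_null hKA hAν
  have hlt : ν K < ENNReal.ofReal (Real.exp (-c)) := by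
    rw [hKν]
    exact ENNReal.ofReal_pos.2 (Real.exp_pos _)
  obtain ⟨U, hKU, hUopen, hUν⟩ := Set.exists_isOpen_lt_of_lt K _ hlt
  -- Urysohn function
  have hnormal : NormalSpace X := by
    let _ := TopologicalSpace.upgradeIsCompletelyMetrizable X
    infer_instance
  obtain ⟨h, h0, h1, h01⟩ := exists_continuous_zero_one_of_isClosed hUopen.isClosed_compl
    hKclosed (Set.disjoint_left.2 fun x hx hxK => hx (hKU hxK))
  have h01' : ∀ x, 0 ≤ h x ∧ h x ≤ 1 := fun x => ⟨(h01 x).1, (h01 x).2⟩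
  -- the bounded continuous function `c • h`
  set ψ : X →ᵇ ℝ := BoundedContinuousFunction.ofNormedAddCommGroup (fun x => c * h x)
    (continuous_const.mul h.continuous) c (fun x => by
      rw [Real.norm_eq_abs, abs_of_nonneg (mul_nonneg hc0 (h01' x).1)]
      calc c * h x ≤ c * 1 := mul_le_mul_of_nonneg_left (h01' x).2 hc0
      _ = c := mul_one c) with hψdef
  have hψapp : ∀ x, ψ x = c * h x := fun x => rfl
  have hint : Integrable (fun x => Real.exp (c * h x)) ν := by
    refine dv_int_of_bound ν
      ((Real.continuous_exp.comp (continuous_const.mul h.continuous)).aestronglyMeasurable)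
      (Real.exp c) (fun x => ?_)
    rw [Real.norm_eq_abs, abs_of_pos (Real.exp_pos _)]
    refine Real.exp_le_exp.2 ?_
    nlinarith [(h01' x).1, (h01' x).2]
  set Z := ∫ x, Real.exp (c * h x) ∂ν with hZdef
  have hZ1 : 1 ≤ Z := by
    have hpt : ∀ x, (1:ℝ) ≤ Real.exp (c * h x) := fun x => by
      rw [show (1:ℝ) = Real.exp 0 from Real.exp_zero.symm]
      exact Real.exp_le_exp.2 (mul_nonneg hc0 (h01' x).1)
    calc (1:ℝ) = ∫ _x, (1:ℝ) ∂ν := by simp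
    _ ≤ Z := integral_mono (integrable_const 1) hint hpt
  have hZ0 : 0 < Z := lt_of_lt_of_le one_pos hZ1
  have hind : Integrable (Set.indicator U fun _ => Real.exp c) ν :=
    (integrable_const _).indicator hUopen.measurableSet
  have hZ2 : Z ≤ 2 := by
    have hpt : ∀ x, Real.exp (c * h x) ≤ 1 + Set.indicator U (fun _ => Real.exp c) x := by
      intro x
      by_cases hx : x ∈ U
      · rw [Set.indicator_of_mem hx]
        have h2 : Real.exp (c * h x) ≤ Real.exp c := by
          refine Real.exp_le_exp.2 ?_
          nlinarith [(h01' x).1, (h01' x).2]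
        linarith
      · have hx0 : h x = 0 := h0 (by exact hx)
        rw [Set.indicator_of_notMem hx, hx0]
        simp
    have hνU : (ν U).toReal ≤ Real.exp (-c) :=
      ((ENNReal.lt_ofReal_iff_toReal_lt (measure_ne_top ν U)).1 hUν).le
    calc Z ≤ ∫ x, (1 + Set.indicator U (fun _ => Real.exp c) x) ∂ν :=
        integral_mono hint ((integrable_const 1).add hind) hpt
    _ = 1 + (ν U).toReal * Real.exp c := by
        rw [integral_add (integrable_const 1) hind, integral_indicator_const _ hUopen.measurableSet]
        simp [smul_eq_mul, measureReal_def]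
    _ ≤ 1 + Real.exp (-c) * Real.exp c := by
        have := mul_le_mul_of_nonneg_right hνU (Real.exp_pos c).le
        linarith
    _ = 2 := by rw [← Real.exp_add]; norm_num
  -- lower bound on `∫ ψ dμ`
  have hψint : Integrable (fun x => c * h x) μ := by
    refine dv_int_of_bound μ ((continuous_const.mul h.continuous).aestronglyMeasurable) c
      (fun x => ?_)
    rw [Real.norm_eq_abs, abs_of_nonneg (mul_nonneg hc0 (h01' x).1)]
    calc c * h x ≤ c * 1 := mul_le_mul_of_nonneg_left (h01' x).2 hc0
    _ = c := mul_one c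
  have hKind : Integrable (Set.indicator K fun _ => c) μ :=
    (integrable_const _).indicator hKclosed.measurableSet
  have hlowpt : ∀ x, Set.indicator K (fun _ => c) x ≤ c * h x := by
    intro x
    by_cases hx : x ∈ K
    · rw [Set.indicator_of_mem hx, h1 hx]
      simp
    · rw [Set.indicator_of_notMem hx]
      exact mul_nonneg hc0 (h01' x).1
  have hlow : c * m ≤ ∫ x, c * h x ∂μ := by
    calc c * m = (μ K).toReal • c := by rw [smul_eq_mul, hmdef]; ring
    _ = ∫ x, Set.indicator K (fun _ => c) x ∂μ :=
        (integral_indicator_const _ hKclosed.measurableSet).symm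
    _ ≤ ∫ x, c * h x ∂μ := integral_mono hKind hψint hlowpt
  -- normalize
  obtain ⟨φ, hφ1, hφ2⟩ := dv_normalize μ ν ψ
  refine ⟨φ, hφ1, ?_⟩
  rw [hφ2]
  have he1 : ∫ x, ψ x ∂μ = ∫ x, c * h x ∂μ := rfl
  have he2 : ∫ x, Real.exp (ψ x) ∂ν = Z := rfl
  rw [he1, he2]
  have hlogZ : Real.log Z ≤ Real.log 2 := Real.log_le_log hZ0 hZ2
  linarith

lemma dv_lower (ac : μ ≪ ν) (r : NNReal)
    (hr : (r : ℝ≥0∞) < ∫⁻ x, ENNReal.ofReal ((μ.rnDeriv ν x).toReal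
      * Real.log (μ.rnDeriv ν x).toReal - (μ.rnDeriv ν x).toReal + 1) ∂ν) :
    ∃ φ : X →ᵇ ℝ, (∫ x, Real.exp (φ x) ∂ν = 1) ∧ (r : ℝ) ≤ ∫ x, φ x ∂μ := by
  set f : X → ℝ := fun x => (μ.rnDeriv ν x).toReal with hfdef
  have hfm : Measurable f := (Measure.measurable_rnDeriv μ ν).ennreal_toReal
  have hf0 : ∀ x, 0 ≤ f x := fun x => ENNReal.toReal_nonneg
  have hfint : Integrable f ν := Measure.integrable_toReal_rnDeriv
  set N : ℕ → ℝ := fun n => (n : ℝ) + 1 with hNdef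
  have hN1 : ∀ n, 1 ≤ N n := fun n => le_add_of_nonneg_left (Nat.cast_nonneg n)
  have hN0 : ∀ n, 0 < N n := fun n => lt_of_lt_of_le one_pos (hN1 n)
  set s : ℕ → X → ℝ := fun n x => max (min (f x) (N n)) (N n)⁻¹ with hsdef
  have hs_lb : ∀ n x, (N n)⁻¹ ≤ s n x := fun n x => le_max_right _ _
  have hNinv : ∀ n, (N n)⁻¹ ≤ N n := by
    intro n
    have h1 : (N n)⁻¹ ≤ 1 := by
      rw [inv_le_one_iff₀]
      exact Or.inr (hN1 n)
    exact h1.trans (hN1 n)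
  have hs_ub : ∀ n x, s n x ≤ N n := fun n x => max_le (min_le_right _ _) (hNinv n)
  have hs_pos : ∀ n x, 0 < s n x := fun n x =>
    lt_of_lt_of_le (by positivity) (hs_lb n x)
  have hsm : ∀ n, Measurable (s n) := fun n =>
    (hfm.min measurable_const).max measurable_const
  set G : ℕ → X → ℝ := fun n x => f x * Real.log (s n x) - s n x + 1 with hGdef
  have hG0 : ∀ n x, 0 ≤ G n x := fun n x => dv_clamp_nonneg (hf0 x) (hN1 n)
  have hGm : ∀ n, Measurable (G n) := fun n =>
    ((hfm.mul (Real.measurable_log.comp (hsm n))).sub (hsm n)).add_const 1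
  have hlog_bound : ∀ n x, |Real.log (s n x)| ≤ Real.log (N n) := by
    intro n x
    rw [abs_le]
    constructor
    · rw [← Real.log_inv]
      exact Real.log_le_log (by positivity) (hs_lb n x)
    · exact Real.log_le_log (hs_pos n x) (hs_ub n x)
  have hflogint : ∀ n, Integrable (fun x => f x * Real.log (s n x)) ν := by
    intro n
    refine (hfint.const_mul (Real.log (N n))).mono'
      ((hfm.mul (Real.measurable_log.comp (hsm n))).aestronglyMeasurable)
      (ae_of_all _ fun x => ?_)
    rw [Real.norm_eq_abs, abs_mul, abs_of_nonneg (hf0 x), mul_comm (Real.log (N n)) (f x)]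
    exact mul_le_mul_of_nonneg_left (hlog_bound n x) (hf0 x)
  have hsint : ∀ n, Integrable (s n) ν := fun n =>
    dv_int_of_bound ν (hsm n).aestronglyMeasurable (N n) (fun x => by
      rw [Real.norm_eq_abs, abs_of_pos (hs_pos n x)]
      exact hs_ub n x)
  have hGint : ∀ n, Integrable (G n) ν := fun n =>
    ((hflogint n).sub (hsint n)).add (integrable_const 1)
  -- pointwise convergence
  have hconv : ∀ x, Tendsto (fun n => ENNReal.ofReal (G n x)) atTop
      (nhds (ENNReal.ofReal (f x * Real.log (f x) - f x + 1))) := by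
    intro x
    refine (ENNReal.continuous_ofReal.tendsto _).comp ?_
    rcases eq_or_lt_of_le (hf0 x) with h | h
    · have he : ∀ n, G n x = 1 - (N n)⁻¹ := by
        intro n
        have e1 : min (f x) (N n) = f x := min_eq_left (by rw [← h]; exact (hN0 n).le)
        have hsx : s n x = (N n)⁻¹ := by
          show max (min (f x) (N n)) (N n)⁻¹ = (N n)⁻¹
          rw [e1]
          exact max_eq_right (by rw [← h]; positivity)
        show f x * Real.log (s n x) - s n x + 1 = 1 - (N n)⁻¹
        rw [hsx, ← h]
        ring
      have hval : f x * Real.log (f x) - f x + 1 = 1 := by rw [← h]; ring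
      rw [hval]
      have hten : Tendsto (fun n : ℕ => 1 - (N n)⁻¹) atTop (nhds (1 - 0 : ℝ)) := by
        refine tendsto_const_nhds.sub ?_
        have := tendsto_one_div_add_atTop_nhds_zero_nat (𝕜 := ℝ)
        simpa [hNdef, one_div] using this
      rw [show (1 : ℝ) = 1 - 0 by ring]
      exact hten.congr fun n => (he n).symm
    · have hev : ∀ᶠ n in atTop, G n x = f x * Real.log (f x) - f x + 1 := by
        obtain ⟨n₀, hn₀⟩ := exists_nat_ge (max (f x) (f x)⁻¹)
        filter_upwards [eventually_ge_atTop n₀] with n hn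
        have hnn : (n₀ : ℝ) ≤ N n := by
          have : (n₀ : ℝ) ≤ (n : ℝ) := Nat.cast_le.2 hn
          simp only [hNdef]
          linarith
        have e1 : min (f x) (N n) = f x :=
          min_eq_left (((le_max_left _ _).trans hn₀).trans hnn)
        have e2 : max (f x) (N n)⁻¹ = f x := by
          refine max_eq_left ?_
          have h2 : (f x)⁻¹ ≤ N n := ((le_max_right _ _).trans hn₀).trans hnn
          calc (N n)⁻¹ ≤ ((f x)⁻¹)⁻¹ := by
                rw [inv_le_inv₀ (hN0 n) (by positivity)]
                exact h2
          _ = f x := inv_inv _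
        simp only [hGdef, hsdef, e1, e2]
      exact tendsto_const_nhds.congr' (hev.mono fun n hn => hn.symm)
  -- Fatou
  have hFatou : ∫⁻ x, ENNReal.ofReal (f x * Real.log (f x) - f x + 1) ∂ν ≤
      liminf (fun n => ∫⁻ x, ENNReal.ofReal (G n x) ∂ν) atTop := by
    refine le_trans (le_of_eq ?_)
      (lintegral_liminf_le (fun n => ENNReal.measurable_ofReal.comp (hGm n)))
    exact lintegral_congr fun x => ((hconv x).liminf_eq).symm
  obtain ⟨n, hn⟩ := (Filter.eventually_lt_of_lt_liminf (lt_of_lt_of_le hr hFatou)).exists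
  rw [← ofReal_integral_eq_lintegral_ofReal (hGint n) (ae_of_all _ (hG0 n))] at hn
  have hrG : (r : ℝ) < ∫ x, G n x ∂ν := by
    rw [← ENNReal.ofReal_coe_nnreal] at hn
    exact (ENNReal.ofReal_lt_ofReal_iff_of_nonneg r.coe_nonneg).1 hn
  -- the bounded measurable candidate
  set M := Real.log (N n) with hMdef
  have hM0 : 0 ≤ M := Real.log_nonneg (hN1 n)
  set L := Real.exp M with hLdef
  have hL1 : 1 ≤ L := by
    rw [hLdef, show (1:ℝ) = Real.exp 0 from Real.exp_zero.symm]
    exact Real.exp_le_exp.2 hM0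
  have hL0 : 0 < L := lt_of_lt_of_le one_pos hL1
  set φ₀ : X → ℝ := fun x => Real.log (s n x) with hφ₀def
  have hφ₀b : ∀ x, |φ₀ x| ≤ M := hlog_bound n
  have hφ₀m : Measurable φ₀ := Real.measurable_log.comp (hsm n)
  have hexpφ₀ : ∀ x, Real.exp (φ₀ x) = s n x := fun x => Real.exp_log (hs_pos n x)
  set A₀ := ∫ x, s n x ∂ν with hA₀def
  have hA₀lb : Real.exp (-M) ≤ A₀ := by
    have he : Real.exp (-M) = (N n)⁻¹ := by
      rw [Real.exp_neg, hMdef, Real.exp_log (hN0 n)]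
    rw [he]
    calc (N n)⁻¹ = ∫ _x, (N n)⁻¹ ∂ν := by simp
    _ ≤ A₀ := integral_mono (integrable_const _) (hsint n) (hs_lb n)
  have hA₀pos : 0 < A₀ := lt_of_lt_of_le (Real.exp_pos _) hA₀lb
  have hB₀ : ∫ x, φ₀ x ∂μ = ∫ x, f x * Real.log (s n x) ∂ν := by
    rw [← MeasureTheory.integral_rnDeriv_smul ac (f := φ₀)]
    simp [smul_eq_mul]
    rfl
  have hG_split : ∫ x, G n x ∂ν = (∫ x, f x * Real.log (s n x) ∂ν) - A₀ + 1 := by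
    calc ∫ x, G n x ∂ν
        = (∫ x, (f x * Real.log (s n x) - s n x) ∂ν) + ∫ _x, (1:ℝ) ∂ν :=
          integral_add ((hflogint n).sub (hsint n)) (integrable_const 1)
    _ = (∫ x, f x * Real.log (s n x) ∂ν) - A₀ + 1 := by
          rw [integral_sub (hflogint n) (hsint n)]
          simp [hA₀def]
  have hD₀ : (r : ℝ) < ∫ x, φ₀ x ∂μ - Real.log A₀ := by
    have hlog : Real.log A₀ ≤ A₀ - 1 := Real.log_le_sub_one_of_pos hA₀pos
    rw [hB₀]
    rw [hG_split] at hrG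
    linarith
  -- approximation by a bounded continuous function
  set ε := (∫ x, φ₀ x ∂μ - Real.log A₀) - r with hεdef
  have hε0 : 0 < ε := by rw [hεdef]; linarith
  set ε' := ε / (2 * (1 + L * L)) with hε'def
  have hε'0 : 0 < ε' := by
    rw [hε'def]
    positivity
  have hφ₀int : Integrable φ₀ (μ + ν) :=
    dv_int_of_bound (μ + ν) hφ₀m.aestronglyMeasurable M
      (fun x => by rw [Real.norm_eq_abs]; exact hφ₀b x)
  have hnormal : NormalSpace X := by
    let _ := TopologicalSpace.upgradeIsCompletelyMetrizable X
    infer_instance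
  obtain ⟨ψ₁, hψ₁, hψ₁int⟩ := hφ₀int.exists_boundedContinuous_integral_sub_le hε'0
  -- clamp ψ₁ to [-M, M]
  set ψ : X →ᵇ ℝ := BoundedContinuousFunction.ofNormedAddCommGroup
    (fun x => max (min (ψ₁ x) M) (-M))
    ((ψ₁.continuous.min continuous_const).max continuous_const) M (fun x => by
      rw [Real.norm_eq_abs, abs_le]
      refine ⟨le_max_right _ _, max_le ((min_le_right _ _)) (by linarith)⟩) with hψdef
  have hψapp : ∀ x, ψ x = max (min (ψ₁ x) M) (-M) := fun x => rfl
  have hψb : ∀ x, |ψ x| ≤ M := fun x => by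
    rw [hψapp, abs_le]
    exact ⟨le_max_right _ _, max_le (min_le_right _ _) (by linarith)⟩
  have hclose : ∀ x, |ψ x - φ₀ x| ≤ ‖φ₀ x - ψ₁ x‖ := fun x => by
    rw [Real.norm_eq_abs, abs_sub_comm (φ₀ x)]
    exact dv_clamp_lip (hφ₀b x)
  -- integral bounds for the difference
  set δ : X → ℝ := fun x => ‖φ₀ x - ψ₁ x‖ with hδdef
  have hδint : Integrable δ (μ + ν) := (hφ₀int.sub (hψ₁int)).norm
  have hδμ : Integrable δ μ := (integrable_add_measure.1 hδint).1
  have hδν : Integrable δ ν := (integrable_add_measure.1 hδint).2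
  have hδ0 : ∀ x, 0 ≤ δ x := fun x => norm_nonneg _
  have hδμ_le : ∫ x, δ x ∂μ ≤ ε' := by
    have hsplit : ∫ x, δ x ∂(μ + ν) = (∫ x, δ x ∂μ) + ∫ x, δ x ∂ν :=
      integral_add_measure hδμ hδν
    have h2 : 0 ≤ ∫ x, δ x ∂ν := integral_nonneg hδ0
    have h3 : ∫ x, δ x ∂(μ + ν) ≤ ε' := hψ₁
    linarith
  have hδν_le : ∫ x, δ x ∂ν ≤ ε' := by
    have hsplit : ∫ x, δ x ∂(μ + ν) = (∫ x, δ x ∂μ) + ∫ x, δ x ∂ν :=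
      integral_add_measure hδμ hδν
    have h2 : 0 ≤ ∫ x, δ x ∂μ := integral_nonneg hδ0
    have h3 : ∫ x, δ x ∂(μ + ν) ≤ ε' := hψ₁
    linarith
  -- integrability of φ₀ and exp φ₀
  have hφ₀intμ : Integrable φ₀ μ := (integrable_add_measure.1 hφ₀int).1
  have hexpφ₀int : Integrable (fun x => Real.exp (φ₀ x)) ν :=
    dv_int_of_bound ν (Real.measurable_exp.comp hφ₀m).aestronglyMeasurable L (fun x => by
      rw [Real.norm_eq_abs, abs_of_pos (Real.exp_pos _), hLdef]
      exact Real.exp_le_exp.2 (le_of_abs_le (hφ₀b x)))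
  have hA₀eq : ∫ x, Real.exp (φ₀ x) ∂ν = A₀ := by
    rw [hA₀def]
    exact integral_congr_ae (ae_of_all _ fun x => hexpφ₀ x)
  -- estimate 1 : integrals against μ
  have hE1 : |(∫ x, ψ x ∂μ) - ∫ x, φ₀ x ∂μ| ≤ ε' := by
    rw [← integral_sub (ψ.integrable μ) hφ₀intμ]
    calc |∫ x, (ψ x - φ₀ x) ∂μ| ≤ ∫ x, |ψ x - φ₀ x| ∂μ := by
          rw [← Real.norm_eq_abs]
          exact (norm_integral_le_integral_norm _).trans (le_of_eq (by simp [Real.norm_eq_abs]))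
    _ ≤ ∫ x, δ x ∂μ :=
          integral_mono ((ψ.integrable μ).sub hφ₀intμ).abs hδμ (fun x => hclose x)
    _ ≤ ε' := hδμ_le
  -- estimate 2 : the exponential integrals
  set Aψ := ∫ x, Real.exp (ψ x) ∂ν with hAψdef
  have hAψlb : Real.exp (-M) ≤ Aψ := by
    have hpt : ∀ x, Real.exp (-M) ≤ Real.exp (ψ x) := fun x =>
      Real.exp_le_exp.2 (neg_le_of_abs_le (hψb x))
    calc Real.exp (-M) = ∫ _x, Real.exp (-M) ∂ν := by simp
    _ ≤ Aψ := integral_mono (integrable_const _) (dv_int_exp ν ψ) hpt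
  have hAψpos : 0 < Aψ := lt_of_lt_of_le (Real.exp_pos _) hAψlb
  have hE2 : |Aψ - A₀| ≤ L * ε' := by
    rw [hAψdef, ← hA₀eq, ← integral_sub (dv_int_exp ν ψ) hexpφ₀int]
    have hpt : ∀ x, |Real.exp (ψ x) - Real.exp (φ₀ x)| ≤ L * δ x := fun x => by
      refine (dv_exp_lip (le_of_abs_le (hψb x)) (le_of_abs_le (hφ₀b x))).trans ?_
      rw [hLdef]
      exact mul_le_mul_of_nonneg_left (hclose x) (Real.exp_pos M).le
    calc |∫ x, (Real.exp (ψ x) - Real.exp (φ₀ x)) ∂ν|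
        ≤ ∫ x, |Real.exp (ψ x) - Real.exp (φ₀ x)| ∂ν := by
          rw [← Real.norm_eq_abs]
          exact (norm_integral_le_integral_norm _).trans (le_of_eq (by simp [Real.norm_eq_abs]))
    _ ≤ ∫ x, L * δ x ∂ν :=
          integral_mono ((dv_int_exp ν ψ).sub hexpφ₀int).abs (hδν.const_mul L) hpt
    _ = L * ∫ x, δ x ∂ν := integral_const_mul L δ
    _ ≤ L * ε' := mul_le_mul_of_nonneg_left hδν_le hL0.le
  -- estimate 3 : the logarithms
  have hE3 : |Real.log Aψ - Real.log A₀| ≤ L * (L * ε') := by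
    have h1 := dv_log_lip (Real.exp_pos (-M)) hAψlb hA₀lb
    have h2 : (Real.exp (-M))⁻¹ = L := by rw [Real.exp_neg, inv_inv, hLdef]
    rw [h2] at h1
    exact h1.trans (mul_le_mul_of_nonneg_left hE2 hL0.le)
  -- conclusion
  have hprod : ε' + L * L * ε' = ε / 2 := by
    rw [hε'def]
    field_simp
  have hDψ : (r : ℝ) ≤ ∫ x, ψ x ∂μ - Real.log Aψ := by
    have e1 := abs_le.1 hE1
    have e3 := abs_le.1 hE3
    have : (r : ℝ) = (∫ x, φ₀ x ∂μ - Real.log A₀) - ε := by rw [hεdef]; ring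
    linarith [e1.1, e3.2]
  obtain ⟨φ, hφ1, hφ2⟩ := dv_normalize μ ν ψ
  refine ⟨φ, hφ1, ?_⟩
  rw [hφ2, ← hAψdef]
  exact hDψ

end DV

/-- Donsker–Varadhan variational formula, constrained form.
For probability measures `μ, ν` on a Polish space `X`, the relative entropy
`H(μ|ν)` (equal to `∫ log(dμ/dν) dμ` when `μ ≪ ν` and `∞` otherwise; here expressed
in `[0,∞]` as `∫ φ(dμ/dν) dν` with `φ(t) = t log t − t + 1 ≥ 0`) satisfies
`H(μ|ν) = sup{⟨μ, φ⟩ : φ ∈ C_b(X), ⟨ν, e^φ⟩ = 1}`. -/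
theorem stmt_13 {X : Type*} [MeasurableSpace X] [TopologicalSpace X] [PolishSpace X]
    [BorelSpace X]
    (μ ν : Measure X) [IsProbabilityMeasure μ] [IsProbabilityMeasure ν]
    (H : ℝ≥0∞)
    (hH : H = if μ ≪ ν then
        ∫⁻ x, ENNReal.ofReal
          ((μ.rnDeriv ν x).toReal * Real.log (μ.rnDeriv ν x).toReal
            - (μ.rnDeriv ν x).toReal + 1) ∂ν
      else ⊤) :
    H = ⨆ (φ : X →ᵇ ℝ) (_ : ∫ x, Real.exp (φ x) ∂ν = 1),
          ENNReal.ofReal (∫ x, φ x ∂μ) := by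
  subst hH
  by_cases ac : μ ≪ ν
  · rw [if_pos ac]
    apply le_antisymm
    · refine ENNReal.le_of_forall_nnreal_lt fun r hr => ?_
      obtain ⟨φ, hφ1, hφ2⟩ := dv_lower μ ν ac r hr
      have h1 : (r : ℝ≥0∞) ≤ ENNReal.ofReal (∫ x, φ x ∂μ) := by
        rw [← ENNReal.ofReal_coe_nnreal]
        exact ENNReal.ofReal_le_ofReal hφ2
      exact h1.trans (le_iSup_of_le φ (by rw [iSup_pos hφ1]))
    · exact iSup₂_le fun φ hφ => dv_upper μ ν ac φ hφ
  · rw [if_neg ac]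
    symm
    apply ENNReal.eq_top_of_forall_nnreal_le
    intro r
    obtain ⟨φ, hφ1, hφ2⟩ := dv_not_ac μ ν ac (r : ℝ)
    have h1 : (r : ℝ≥0∞) ≤ ENNReal.ofReal (∫ x, φ x ∂μ) := by
      rw [← ENNReal.ofReal_coe_nnreal]
      exact ENNReal.ofReal_le_ofReal hφ2
    exact h1.trans (le_iSup_of_le φ (by rw [iSup_pos hφ1]))
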